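/- Let (p_j)_{j≥1} be positive reals summing to 1, Φ_r(t) = (t^r/r!) ∑_j e^{-t p_j} p_j^r. Suppose Φ_r(t) = g(t) log t with g(t) → ∞ as t → ∞. Then Φ_{r+1}(t)/Φ_r(t)² → 0 as t → ∞. -/

import Mathlib

open Filter

noncomputable def Phi (p : ℕ → ℝ) (r : ℕ) (t : ℝ) : ℝ :=
  t ^ r / (Nat.factorial r) * ∑' j, Real.exp (-t * p j) * p j ^ r

section Aux

variable {p : ℕ → ℝ}

lemma p_le_one (hp : ∀ j, 0 < p j) (hsum : Summable p) (h1 : ∑' j, p j = 1) (j : ℕ) :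
    p j ≤ 1 :=
  h1 ▸ Summable.le_tsum hsum j fun i _ => (hp i).le

lemma term_le (hp : ∀ j, 0 < p j) (hsum : Summable p) (h1 : ∑' j, p j = 1)
    {t : ℝ} (ht : 0 ≤ t) {s : ℕ} (hs : 1 ≤ s) (j : ℕ) :
    Real.exp (-t * p j) * p j ^ s ≤ p j := by
  have h0 := (hp j).le
  have h1' := p_le_one hp hsum h1 j
  calc Real.exp (-t * p j) * p j ^ s ≤ 1 * p j ^ 1 := by
        apply mul_le_mul _ (pow_le_pow_of_le_one h0 h1' hs) (by positivity) zero_le_one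
        exact Real.exp_le_one_iff.mpr (by nlinarith)
    _ = p j := by ring

lemma summable_term (hp : ∀ j, 0 < p j) (hsum : Summable p) (h1 : ∑' j, p j = 1)
    {t : ℝ} (ht : 0 ≤ t) {s : ℕ} (hs : 1 ≤ s) :
    Summable fun j => Real.exp (-t * p j) * p j ^ s :=
  Summable.of_nonneg_of_le (fun j => by have := (hp j).le; positivity)
    (term_le hp hsum h1 ht hs) hsum

lemma summable_pow (hp : ∀ j, 0 < p j) (hsum : Summable p) (h1 : ∑' j, p j = 1)
    {s : ℕ} (hs : 1 ≤ s) : Summable fun j => p j ^ s :=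
  Summable.of_nonneg_of_le (fun j => by have := (hp j).le; positivity)
    (fun j => by
      have := pow_le_pow_of_le_one (hp j).le (p_le_one hp hsum h1 j) hs
      simpa using this) hsum

lemma tsum_pow_le_one (hp : ∀ j, 0 < p j) (hsum : Summable p) (h1 : ∑' j, p j = 1)
    {s : ℕ} (hs : 1 ≤ s) : ∑' j, p j ^ s ≤ 1 := by
  rw [← h1]
  apply Summable.tsum_le_tsum _ (summable_pow hp hsum h1 hs) hsum
  intro j
  have := pow_le_pow_of_le_one (hp j).le (p_le_one hp hsum h1 j) hs
  simpa using this

lemma holder_step (hp : ∀ j, 0 < p j) (hsum : Summable p) (h1 : ∑' j, p j = 1)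
    {r : ℕ} (hr : 1 ≤ r) {t γ : ℝ} (ht : 0 < t) (hγ0 : 0 < γ) (hγ1 : γ < 1) :
    ∑' j, Real.exp (-(γ * t) * p j) * p j ^ r
      ≤ (∑' j, Real.exp (-t * p j) * p j ^ r) ^ γ := by
  have h1γ : 0 < 1 - γ := by linarith
  set a : ℕ → ℝ := fun j => Real.exp (-t * p j) * p j ^ r with ha
  set b : ℕ → ℝ := fun j => p j ^ r with hb
  have ha0 : ∀ j, 0 ≤ a j := fun j => by have := (hp j).le; positivity
  have hb0 : ∀ j, 0 ≤ b j := fun j => by have := (hp j).le; positivity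
  have hpq : (1/γ).HolderConjugate (1/(1-γ)) := by
    rw [Real.holderConjugate_iff]
    constructor
    · rw [lt_div_iff₀ hγ0]; linarith
    · rw [one_div, one_div, inv_inv, inv_inv]; ring
  have hfP : ∀ j, (a j ^ γ) ^ (1/γ) = a j := fun j => by
    rw [← Real.rpow_mul (ha0 j), mul_one_div_cancel hγ0.ne', Real.rpow_one]
  have hgQ : ∀ j, (b j ^ (1-γ)) ^ (1/(1-γ)) = b j := fun j => by
    rw [← Real.rpow_mul (hb0 j), mul_one_div_cancel h1γ.ne', Real.rpow_one]
  have hfsum : Summable fun j => (a j ^ γ) ^ (1/γ) := by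
    simp only [hfP]; exact summable_term hp hsum h1 ht.le hr
  have hgsum : Summable fun j => (b j ^ (1-γ)) ^ (1/(1-γ)) := by
    simp only [hgQ]; exact summable_pow hp hsum h1 hr
  have H := Real.inner_le_Lp_mul_Lq_tsum_of_nonneg hpq
    (fun j => Real.rpow_nonneg (ha0 j) γ)
    (fun j => Real.rpow_nonneg (hb0 j) (1-γ)) hfsum hgsum
  simp only [hfP, hgQ, one_div_one_div] at H
  have hLHS : ∀ j, a j ^ γ * b j ^ (1-γ) = Real.exp (-(γ * t) * p j) * p j ^ r := by
    intro j
    have hpj := hp j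
    have hpr : (0:ℝ) < p j ^ r := pow_pos hpj r
    rw [ha, hb]
    rw [Real.mul_rpow (Real.exp_nonneg _) hpr.le, mul_assoc, ← Real.rpow_add hpr,
      show γ + (1 - γ) = 1 by ring, Real.rpow_one, ← Real.exp_mul]
    congr 2
    ring
  rw [← tsum_congr hLHS]
  refine H.trans ?_
  have hb1 : (∑' j, b j) ^ (1-γ) ≤ 1 :=
    Real.rpow_le_one (tsum_nonneg fun j => hb0 j) (tsum_pow_le_one hp hsum h1 hr) h1γ.le
  have hA0 : 0 ≤ (∑' j, a j) ^ γ := Real.rpow_nonneg (tsum_nonneg ha0) γ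
  calc (∑' j, a j) ^ γ * (∑' j, b j) ^ (1-γ) ≤ (∑' j, a j) ^ γ * 1 := by
        apply mul_le_mul_of_nonneg_left hb1 hA0
    _ = (∑' j, a j) ^ γ := by ring

lemma key (hp : ∀ j, 0 < p j) (hsum : Summable p) (h1 : ∑' j, p j = 1)
    {r : ℕ} (hr : 1 ≤ r) {t γ : ℝ} (ht : 0 < t) (hγ0 : 0 < γ) (hγ1 : γ < 1) :
    Phi p (r + 1) t ≤
      (t ^ r / (Nat.factorial r)) ^ (1 - γ) * (Phi p r t) ^ γ / (((r : ℝ) + 1) * (1 - γ)) := by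
  have h1γ : 0 < 1 - γ := by linarith
  have hfact : (0:ℝ) < (Nat.factorial r : ℝ) := by
    exact_mod_cast r.factorial_pos
  have hγt : (0:ℝ) ≤ γ * t := by positivity
  set S := ∑' j, Real.exp (-t * p j) * p j ^ r with hSdef
  have hS0 : 0 ≤ S := tsum_nonneg fun j => by have := (hp j).le; positivity
  -- Step A, pointwise
  have stepA : ∀ j, Real.exp (-t * p j) * p j ^ (r + 1) ≤
      (1 / ((1 - γ) * t)) * (Real.exp (-(γ * t) * p j) * p j ^ r) := by
    intro j
    have hpj := hp j
    set c := (1 - γ) * t with hc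
    have hc0 : 0 < c := by positivity
    have hsplit : Real.exp (-t * p j) = Real.exp (-(γ * t) * p j) * Real.exp (-(c * p j)) := by
      rw [← Real.exp_add]; congr 1; rw [hc]; ring
    have hx : Real.exp (-(c * p j)) * p j ≤ 1 / c := by
      have he := Real.add_one_le_exp (c * p j)
      have hmul : Real.exp (-(c * p j)) * Real.exp (c * p j) = 1 := by
        rw [← Real.exp_add]; simp
      have hem : 0 < Real.exp (-(c * p j)) := Real.exp_pos _
      rw [le_div_iff₀ hc0]
      nlinarith
    calc Real.exp (-t * p j) * p j ^ (r + 1)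
        = (Real.exp (-(γ * t) * p j) * p j ^ r) * (Real.exp (-(c * p j)) * p j) := by
          rw [hsplit, pow_succ]; ring
      _ ≤ (Real.exp (-(γ * t) * p j) * p j ^ r) * (1 / c) := by
          apply mul_le_mul_of_nonneg_left hx (by positivity)
      _ = (1 / ((1 - γ) * t)) * (Real.exp (-(γ * t) * p j) * p j ^ r) := by
          rw [hc]; ring
  have hsumA : Summable fun j => Real.exp (-(γ * t) * p j) * p j ^ r :=
    summable_term hp hsum h1 hγt hr
  have tA : (∑' j, Real.exp (-t * p j) * p j ^ (r + 1)) ≤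
      (1 / ((1 - γ) * t)) * ∑' j, Real.exp (-(γ * t) * p j) * p j ^ r := by
    rw [← tsum_mul_left]
    exact Summable.tsum_le_tsum stepA
      (summable_term hp hsum h1 ht.le (Nat.le_succ_of_le hr)) (hsumA.mul_left _)
  have tB := holder_step hp hsum h1 hr ht hγ0 hγ1
  have hcoef0 : (0:ℝ) ≤ t ^ (r + 1) / ((Nat.factorial (r + 1) : ℝ)) := by positivity
  have hSγ0 : 0 ≤ S ^ γ := Real.rpow_nonneg hS0 γ
  calc Phi p (r + 1) t
      = t ^ (r + 1) / ((Nat.factorial (r + 1) : ℝ)) *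
          ∑' j, Real.exp (-t * p j) * p j ^ (r + 1) := rfl
    _ ≤ t ^ (r + 1) / ((Nat.factorial (r + 1) : ℝ)) *
          ((1 / ((1 - γ) * t)) * ∑' j, Real.exp (-(γ * t) * p j) * p j ^ r) :=
        mul_le_mul_of_nonneg_left tA hcoef0
    _ ≤ t ^ (r + 1) / ((Nat.factorial (r + 1) : ℝ)) * ((1 / ((1 - γ) * t)) * S ^ γ) := by
        apply mul_le_mul_of_nonneg_left _ hcoef0
        apply mul_le_mul_of_nonneg_left tB (by positivity)
    _ = (t ^ r / (Nat.factorial r)) ^ (1 - γ) * (Phi p r t) ^ γ / (((r : ℝ) + 1) * (1 - γ)) := by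
        have hPhi : Phi p r t = t ^ r / (Nat.factorial r) * S := rfl
        have hpos : (0:ℝ) < t ^ r / (Nat.factorial r) := by positivity
        have hcomb : (t ^ r / (Nat.factorial r : ℝ)) ^ (1 - γ) *
            ((t ^ r / (Nat.factorial r : ℝ)) ^ γ * S ^ γ) =
            (t ^ r / (Nat.factorial r : ℝ)) * S ^ γ := by
          rw [← mul_assoc, ← Real.rpow_add hpos, show 1 - γ + γ = 1 by ring, Real.rpow_one]
        rw [hPhi, Real.mul_rpow (by positivity) hS0, hcomb]
        have hfs : ((Nat.factorial (r + 1) : ℝ)) = ((r : ℝ) + 1) * (Nat.factorial r : ℝ) := by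
          rw [Nat.factorial_succ]; push_cast; ring
        rw [hfs, pow_succ]
        have hr1 : (0:ℝ) < (r : ℝ) + 1 := by positivity
        field_simp
end Aux

theorem stmt_10 (p : ℕ → ℝ) (hp : ∀ j, 0 < p j) (hsum : Summable p)
    (h1 : ∑' j, p j = 1) (r : ℕ) (hr : 1 ≤ r) (g : ℝ → ℝ)
    (hgeq : ∀ᶠ t in atTop, Phi p r t = g t * Real.log t)
    (hg : Tendsto g atTop atTop) :
    Tendsto (fun t => Phi p (r + 1) t / (Phi p r t) ^ 2) atTop (nhds 0) := by
  have hnn : ∀ᶠ t in atTop, 0 ≤ Phi p (r + 1) t / (Phi p r t) ^ 2 := by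
    filter_upwards [eventually_ge_atTop (0:ℝ)] with t ht
    apply div_nonneg _ (by positivity)
    apply mul_nonneg (by positivity)
    exact tsum_nonneg fun j => by have := (hp j).le; positivity
  have hlim : Tendsto (fun t => Real.exp r / (((r : ℝ) + 1) * g t)) atTop (nhds 0) := by
    have h := (hg.const_mul_atTop (show (0:ℝ) < (r : ℝ) + 1 by positivity)).inv_tendsto_atTop
    have h2 := h.const_mul (Real.exp r)
    simpa [div_eq_mul_inv, Function.comp] using h2
  have hbound : ∀ᶠ t in atTop,
      Phi p (r + 1) t / (Phi p r t) ^ 2 ≤ Real.exp r / (((r : ℝ) + 1) * g t) := by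
    filter_upwards [eventually_ge_atTop (3:ℝ), eventually_ge_atTop ((Nat.factorial r : ℝ)),
      hgeq, hg.eventually_ge_atTop 1] with t ht3 htf hgt hg1
    have ht0 : (0:ℝ) < t := by linarith
    have hL : 1 < Real.log t := by
      rw [← Real.exp_lt_exp, Real.exp_log ht0]
      calc Real.exp 1 < 2.7182818286 := Real.exp_one_lt_d9
        _ ≤ t := by norm_num; linarith
    set L := Real.log t with hLdef
    have hL0 : 0 < L := by linarith
    set γ := 1 - 1 / L with hγdef
    have h1L : 1 / L < 1 := by rw [div_lt_one hL0]; linarith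
    have h1L0 : 0 < 1 / L := by positivity
    have hγ0 : 0 < γ := by rw [hγdef]; linarith
    have hγ1 : γ < 1 := by rw [hγdef]; linarith
    have h1γ : 1 - γ = 1 / L := by rw [hγdef]; ring
    have hΦ1 : 1 ≤ Phi p r t := by rw [hgt]; nlinarith
    have hΦ0 : 0 < Phi p r t := zero_lt_one.trans_le hΦ1
    have hfact1 : (1:ℝ) ≤ (Nat.factorial r : ℝ) := by exact_mod_cast r.factorial_pos
    have hkey := key hp hsum h1 hr ht0 hγ0 hγ1
    rw [h1γ] at hkey
    -- bound (t^r/r!)^(1/L) ≤ exp r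
    have hA : (t ^ r / (Nat.factorial r : ℝ)) ^ (1 / L : ℝ) ≤ Real.exp r := by
      have step1 : (t ^ r / (Nat.factorial r : ℝ)) ^ (1 / L : ℝ) ≤ (t ^ r) ^ (1 / L : ℝ) := by
        apply Real.rpow_le_rpow (by positivity) (div_le_self (by positivity) hfact1) h1L0.le
      refine step1.trans_eq ?_
      rw [Real.rpow_def_of_pos (pow_pos ht0 r), Real.log_pow]
      congr 1
      field_simp
      exact hLdef.symm
    -- bound Φ^γ / Φ^2 ≤ 1/Φ
    have hB : (Phi p r t) ^ γ / (Phi p r t) ^ 2 ≤ 1 / Phi p r t := by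
      have e1 : (Phi p r t) ^ (2:ℕ) = (Phi p r t) ^ ((2:ℕ) : ℝ) := by
        rw [Real.rpow_natCast]
      rw [e1, ← Real.rpow_sub hΦ0]
      have e2 : (Phi p r t) ^ (γ - ((2:ℕ):ℝ)) ≤ (Phi p r t) ^ (-1 : ℝ) := by
        apply Real.rpow_le_rpow_of_exponent_le hΦ1
        push_cast
        linarith
      refine e2.trans_eq ?_
      rw [Real.rpow_neg_one, one_div]
    have hΦsq : (0:ℝ) < (Phi p r t) ^ 2 := by positivity
    calc Phi p (r + 1) t / (Phi p r t) ^ 2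
        ≤ ((t ^ r / (Nat.factorial r)) ^ (1 / L : ℝ) * (Phi p r t) ^ γ /
            (((r : ℝ) + 1) * (1 / L))) / (Phi p r t) ^ 2 :=
          div_le_div_of_nonneg_right hkey hΦsq.le
      _ = (t ^ r / (Nat.factorial r)) ^ (1 / L : ℝ) *
            ((Phi p r t) ^ γ / (Phi p r t) ^ 2) * (L / ((r : ℝ) + 1)) := by
          field_simp
      _ ≤ Real.exp r * (1 / Phi p r t) * (L / ((r : ℝ) + 1)) := by
          apply mul_le_mul_of_nonneg_right _ (by positivity)
          apply mul_le_mul hA hB (by positivity) (Real.exp_nonneg _)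
      _ = Real.exp r / (((r : ℝ) + 1) * g t) := by
          rw [hgt]
          have hgt0 : 0 < g t := by linarith
          field_simp
  exact squeeze_zero' hnn hbound hlim
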